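/- For natural numbers k, s, i with j ranging over 0 ≤ j ≤ k, and an element B of a commutative ring together with a generalized binomial symbol, one has ∑_{j=0}^{k} binom(M+k,k-j)·binom(i-k,j)·(1-B)^{i-k-j}·(-B)^j = ∑_{s=0}^{i-k} binom(i-k,s)·binom(M+k+s,k)·(-B)^s. -/

import Mathlib

/-- The generalized binomial coefficient `binom(x,k) = x(x-1)⋯(x-k+1)/k!` for an element
`x` of a commutative `ℚ`-algebra. -/
noncomputable def genBinom {S : Type*} [CommRing S] [Algebra ℚ S] (x : S) (k : ℕ) : S :=
  algebraMap ℚ S ((k.factorial : ℚ))⁻¹ * ∏ t ∈ Finset.range k, (x - (t : S))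

/-- Pascal's rule for `genBinom`. -/
lemma genBinom_succ_succ {S : Type*} [CommRing S] [Algebra ℚ S] (x : S) (k : ℕ) :
    genBinom (x + 1) (k + 1) = genBinom x (k + 1) + genBinom x k := by
  unfold genBinom
  have h1 : ∏ t ∈ Finset.range (k + 1), (x + 1 - (t : S))
      = (x + 1) * ∏ t ∈ Finset.range k, (x - (t : S)) := by
    rw [Finset.prod_range_succ']
    simp only [Nat.cast_zero, sub_zero, mul_comm]
    congr 1
    apply Finset.prod_congr rfl
    intro t _
    push_cast
    ring
  have h2 : ∏ t ∈ Finset.range (k + 1), (x - (t : S))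
      = (∏ t ∈ Finset.range k, (x - (t : S))) * (x - (k : S)) := by
    rw [Finset.prod_range_succ]
  rw [h1, h2]
  have hfact : ((k + 1).factorial : ℚ)⁻¹ * ((k : ℚ) + 1) = ((k.factorial : ℚ))⁻¹ := by
    rw [Nat.factorial_succ]
    push_cast
    rw [mul_inv]
    field_simp
  have : (algebraMap ℚ S) ((k.factorial : ℚ))⁻¹
      = (algebraMap ℚ S) (((k + 1).factorial : ℚ))⁻¹ * ((k : S) + 1) := by
    rw [← hfact, map_mul]
    push_cast
    simp
  rw [this]
  ring

/-- Vandermonde identity for `genBinom` with a natural shift. -/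
lemma genBinom_vandermonde {S : Type*} [CommRing S] [Algebra ℚ S] (x : S) (s : ℕ) :
    ∀ k : ℕ, genBinom (x + (s : S)) k
      = ∑ j ∈ Finset.range (k + 1), genBinom x (k - j) * (s.choose j : S) := by
  induction s with
  | zero =>
    intro k
    rw [Finset.sum_eq_single 0]
    · simp
    · intro j _ hj
      obtain ⟨m, rfl⟩ := Nat.exists_eq_succ_of_ne_zero hj
      simp
    · simp
  | succ s ih =>
    intro k
    have hx : x + ((s + 1 : ℕ) : S) = (x + (s : S)) + 1 := by push_cast; ring
    rw [hx]
    cases k with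
    | zero =>
      simp [genBinom]
    | succ m =>
      rw [genBinom_succ_succ, ih (m + 1), ih m]
      rw [Finset.sum_range_succ' _ (m + 1), Finset.sum_range_succ' _ (m + 1)]
      simp only [Nat.sub_zero, Nat.choose_zero_right, Nat.cast_one, mul_one,
        Nat.succ_sub_succ_eq_sub, Nat.choose_succ_succ]
      push_cast
      simp only [Nat.succ_eq_add_one, mul_add, Finset.sum_add_distrib]
      ring

/-- Inner binomial sum. -/
lemma binomInnerSum {S : Type*} [CommRing S] (X : S) (n j : ℕ) :
    ∑ s ∈ Finset.range (n + 1), (n.choose s : S) * (s.choose j : S) * X ^ s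
      = (n.choose j : S) * X ^ j * (1 + X) ^ (n - j) := by
  by_cases hjn : j ≤ n
  · have hsplit : Finset.range (n + 1)
        = Finset.range j ∪ Finset.Ico j (n + 1) := by
      rw [Finset.range_eq_Ico, Finset.range_eq_Ico, Finset.Ico_union_Ico_eq_Ico (Nat.zero_le _) (by omega)]
    rw [hsplit, Finset.sum_union]
    · have hz : ∑ s ∈ Finset.range j, (n.choose s : S) * (s.choose j : S) * X ^ s = 0 := by
        apply Finset.sum_eq_zero
        intro s hs
        rw [Finset.mem_range] at hs
        rw [Nat.choose_eq_zero_of_lt hs]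
        simp
      rw [hz, zero_add, Finset.sum_Ico_eq_sum_range]
      have hlen : n + 1 - j = (n - j) + 1 := by omega
      rw [hlen]
      have hterm : ∀ t ∈ Finset.range (n - j + 1),
          (n.choose (j + t) : S) * ((j + t).choose j : S) * X ^ (j + t)
            = (n.choose j : S) * X ^ j * ((n - j).choose t * X ^ t) := by
        intro t ht
        rw [Finset.mem_range] at ht
        have hc : n.choose (j + t) * (j + t).choose j
            = n.choose j * (n - j).choose t := by
          have := Nat.choose_mul (n := n) (k := j + t) (s := j) (by omega)
          simpa [Nat.add_sub_cancel_left] using this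
        calc (n.choose (j + t) : S) * ((j + t).choose j : S) * X ^ (j + t)
            = ((n.choose (j + t) * (j + t).choose j : ℕ) : S) * (X ^ j * X ^ t) := by
              push_cast; ring
          _ = ((n.choose j * (n - j).choose t : ℕ) : S) * (X ^ j * X ^ t) := by rw [hc]
          _ = (n.choose j : S) * X ^ j * ((n - j).choose t * X ^ t) := by push_cast; ring
      rw [Finset.sum_congr rfl hterm, ← Finset.mul_sum]
      congr 1
      rw [add_comm (1:S) X, add_pow X 1 (n - j)]
      simp [mul_comm]
    · rw [Finset.range_eq_Ico]
      exact Finset.Ico_disjoint_Ico_consecutive 0 j (n + 1)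
  · rw [Nat.choose_eq_zero_of_lt (by omega)]
    simp only [Nat.cast_zero, zero_mul]
    apply Finset.sum_eq_zero
    intro s hs
    rw [Finset.mem_range] at hs
    rw [Nat.choose_eq_zero_of_lt (show s < j by omega)]
    simp

/-- For `k ≤ i` and `B`, `M` in a commutative `ℚ`-algebra:
`∑_{j=0}^{k} binom(M+k,k-j)·binom(i-k,j)·(1-B)^{i-k-j}·(-B)^j
  = ∑_{s=0}^{i-k} binom(i-k,s)·binom(M+k+s,k)·(-B)^s`. -/
theorem binom_sum_reindex_identity {S : Type*} [CommRing S] [Algebra ℚ S]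
    (M B : S) (i k : ℕ) (hk : k ≤ i) :
    (∑ j ∈ Finset.range (k + 1),
        genBinom (M + (k : S)) (k - j) * ((i - k).choose j : S) *
          (1 - B) ^ (i - k - j) * (-B) ^ j)
      = ∑ s ∈ Finset.range (i - k + 1),
          ((i - k).choose s : S) * genBinom (M + (k : S) + (s : S)) k * (-B) ^ s := by
  set n := i - k with hn
  have hrhs : ∀ s ∈ Finset.range (n + 1),
      (n.choose s : S) * genBinom (M + (k : S) + (s : S)) k * (-B) ^ s
        = ∑ j ∈ Finset.range (k + 1),
            genBinom (M + (k : S)) (k - j) * ((n.choose s : S) * (s.choose j : S) * (-B) ^ s) := by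
    intro s _
    rw [genBinom_vandermonde (M + (k : S)) s k, Finset.mul_sum, Finset.sum_mul]
    apply Finset.sum_congr rfl
    intro j _
    ring
  rw [Finset.sum_congr rfl hrhs, Finset.sum_comm]
  apply Finset.sum_congr rfl
  intro j _
  rw [← Finset.mul_sum, binomInnerSum (-B) n j]
  have : (1 : S) + -B = 1 - B := by ring
  rw [this]
  ring
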